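/- Let μ be a σ-finite measure on a measurable space Y and let {p_θ : θ ∈ Θ} be a family of probability densities with respect to μ. Fix θ*_a, θ*_b ∈ Θ, positive integers n_a, n_b with n = n_a + n_b, and suppose there exists θ° ∈ Θ such that p_{θ°} = (n_a/n)·p_{θ*_a} + (n_b/n)·p_{θ*_b} μ-almost everywhere (convexity of the model). Let Q = P_{θ*_a}^{⊗n_a} ⊗ P_{θ*_b}^{⊗n_b} on Y^n and let s(x_1,…,x_n) = ∏_{i=1}^{n_a} p_{θ*_a}(x_i)/p_{θ°}(x_i) · ∏_{i=n_a+1}^{n} p_{θ*_b}(x_i)/p_{θ°}(x_i). Then for every nonnegative measurable function s' on Y^n satisfying ∫ s' dP_θ^{⊗n} ≤ 1 for all θ ∈ Θ, one has ∫ log s' dQ ≤ ∫ log s dQ (expectations taken in the extended reals). -/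

import Mathlib

open MeasureTheory ENNReal
open scoped NNReal

/-- The positive part of an extended real, as an element of `ℝ≥0∞`. -/
noncomputable def ePos (x : EReal) : ℝ≥0∞ := if x = ⊤ then ⊤ else ENNReal.ofReal x.toReal

/-- The expectation of an extended-real-valued function, defined in the extended reals as
the difference of the lower integrals of the positive and the negative part. -/
noncomputable def eIntegral {α : Type*} [MeasurableSpace α] (ν : Measure α)
    (g : α → EReal) : EReal :=
  ((∫⁻ x, ePos (g x) ∂ν : ℝ≥0∞) : EReal) - ((∫⁻ x, ePos (-(g x)) ∂ν : ℝ≥0∞) : EReal)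

section AuxEPos

lemma ePos_top : ePos ⊤ = ⊤ := rfl
lemma ePos_bot : ePos ⊥ = 0 := by simp [ePos]
lemma ePos_coe (r : ℝ) : ePos (r : EReal) = ENNReal.ofReal r := by simp [ePos]

lemma ePos_mono : Monotone ePos := by
  intro x y hxy
  rcases eq_or_ne y ⊤ with rfl | hy
  · simp [ePos_top]
  rcases eq_or_ne x ⊥ with rfl | hx
  · simp [ePos_bot]
  have hx' : x ≠ ⊤ := fun h => hy (top_le_iff.mp (h ▸ hxy))
  simp only [ePos, if_neg hy, if_neg hx']
  exact ENNReal.ofReal_le_ofReal (EReal.toReal_le_toReal hxy hx hy)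

lemma ePos_coe_ennreal (t : ℝ≥0∞) : ePos (t : EReal) = t := by
  rcases eq_or_ne t ⊤ with rfl | ht
  · simp [ePos]
  · simp [ePos, EReal.coe_ennreal_eq_top_iff, ht, EReal.toReal_coe_ennreal,
      ENNReal.ofReal_toReal ht]

lemma log_le_coe (t : ℝ≥0∞) : ENNReal.log t ≤ (t : EReal) := by
  rcases eq_or_ne t ⊤ with rfl | ht
  · simp
  rcases eq_or_ne t 0 with rfl | h0
  · simp
  rw [ENNReal.log_pos_real h0 ht]
  have h1 : (t : EReal) = ((t.toReal : ℝ) : EReal) := by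
    rw [← ENNReal.ofReal_toReal ht, EReal.coe_ennreal_ofReal,
      max_eq_left ENNReal.toReal_nonneg, ENNReal.toReal_ofReal ENNReal.toReal_nonneg]
  rw [h1, EReal.coe_le_coe_iff]
  have := Real.log_le_sub_one_of_pos (ENNReal.toReal_pos h0 ht)
  linarith

lemma ePos_log_le (t : ℝ≥0∞) : ePos (ENNReal.log t) ≤ t := by
  calc ePos (ENNReal.log t) ≤ ePos (t : EReal) := ePos_mono (log_le_coe t)
  _ = t := ePos_coe_ennreal t

lemma ePos_log_le_sub_one (t : ℝ≥0∞) : ePos (ENNReal.log t) ≤ t - 1 := by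
  rcases eq_or_ne t ⊤ with rfl | ht
  · simp
  rcases eq_or_ne t 0 with rfl | h0
  · simp [ePos_bot]
  rw [ENNReal.log_pos_real h0 ht, ePos_coe]
  have h2 : t - 1 = ENNReal.ofReal (t.toReal - 1) := by
    rw [ENNReal.ofReal_sub _ zero_le_one, ENNReal.ofReal_toReal ht, ENNReal.ofReal_one]
  rw [h2]
  exact ENNReal.ofReal_le_ofReal (Real.log_le_sub_one_of_pos (ENNReal.toReal_pos h0 ht))

lemma one_sub_le_ePos_neg_log (t : ℝ≥0∞) : 1 - t ≤ ePos (-(ENNReal.log t)) := by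
  rcases eq_or_ne t ⊤ with rfl | ht
  · simp
  rcases eq_or_ne t 0 with rfl | h0
  · simp [ePos_top]
  rw [ENNReal.log_pos_real h0 ht, ← EReal.coe_neg, ePos_coe]
  have h2 : 1 - t = ENNReal.ofReal (1 - t.toReal) := by
    rw [ENNReal.ofReal_sub _ ENNReal.toReal_nonneg, ENNReal.ofReal_toReal ht,
      ENNReal.ofReal_one]
  rw [h2]
  apply ENNReal.ofReal_le_ofReal
  have := Real.log_le_sub_one_of_pos (ENNReal.toReal_pos h0 ht)
  linarith

lemma measurable_ePos_log : Measurable fun t : ℝ≥0∞ => ePos (ENNReal.log t) :=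
  (ePos_mono.comp ENNReal.log_monotone).measurable

lemma measurable_ePos_neg_log : Measurable fun t : ℝ≥0∞ => ePos (-(ENNReal.log t)) := by
  have : Antitone fun t : ℝ≥0∞ => ePos (-(ENNReal.log t)) := by
    intro x y hxy
    exact ePos_mono (EReal.neg_le_neg_iff.mpr (ENNReal.log_monotone hxy))
  exact this.measurable

lemma max_sub_max_neg (a : ℝ) : max a 0 - max (-a) 0 = a := by
  rcases le_total a 0 with h | h
  · rw [max_eq_right h, max_eq_left (neg_nonneg.mpr h)]; ring
  · rw [max_eq_left h, max_eq_right (neg_nonpos.mpr h)]; ring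

lemma ofReal_max (z : ℝ) : ENNReal.ofReal z = ENNReal.ofReal (max z 0) := by
  rcases le_total z 0 with h | h
  · rw [ENNReal.ofReal_of_nonpos h, max_eq_right h, ENNReal.ofReal_zero]
  · rw [max_eq_left h]

lemma ofReal_identity (r w : ℝ) :
    ENNReal.ofReal (r + w) + (ENNReal.ofReal (-r) + ENNReal.ofReal (-w)) =
      ENNReal.ofReal (-(r + w)) + (ENNReal.ofReal r + ENNReal.ofReal w) := by
  rw [_root_.ofReal_max (r + w), _root_.ofReal_max (-r), _root_.ofReal_max (-w), _root_.ofReal_max (-(r + w)),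
    _root_.ofReal_max r, _root_.ofReal_max w,
    ← ENNReal.ofReal_add (le_max_right _ _) (le_max_right _ _),
    ← ENNReal.ofReal_add (le_max_right _ _) (add_nonneg (le_max_right _ _) (le_max_right _ _)),
    ← ENNReal.ofReal_add (le_max_right _ _) (le_max_right _ _),
    ← ENNReal.ofReal_add (le_max_right _ _) (add_nonneg (le_max_right _ _) (le_max_right _ _))]
  congr 1
  have h1 := max_sub_max_neg (r + w)
  have h2 := max_sub_max_neg r
  have h3 := max_sub_max_neg w
  linarith

lemma ePos_accounting (u : EReal) (w : ℝ) :
    ePos (u + (w : EReal)) + (ePos (-u) + ePos (-(w : EReal))) =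
      ePos (-(u + (w : EReal))) + (ePos u + ePos (w : EReal)) := by
  induction u using EReal.rec with
  | bot => simp [ePos_bot, ePos_top, ← EReal.coe_neg, ePos_coe]
  | top => simp [ePos_bot, ePos_top, ← EReal.coe_neg, ePos_coe]
  | coe r =>
    rw [← EReal.coe_add, ← EReal.coe_neg r, ← EReal.coe_neg w, ← EReal.coe_neg (r + w)]
    simp only [ePos_coe]
    exact ofReal_identity r w

lemma ereal_add_neg_coe_add (a : EReal) (w : ℝ) : (a + -(w : EReal)) + (w : EReal) = a := by
  induction a using EReal.rec with
  | bot => rw [← EReal.coe_neg]; simp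
  | top => rw [← EReal.coe_neg]; simp
  | coe r => rw [← EReal.coe_neg, ← EReal.coe_add, ← EReal.coe_add]; norm_num

lemma ereal_sub_le_sub (a b c d : ℝ≥0∞) (hc : c ≠ ⊤) (hd : d ≠ ⊤)
    (h : a + d ≤ c + b) : (a : EReal) - (b : EReal) ≤ (c : EReal) - (d : EReal) := by
  rcases eq_or_ne b ⊤ with rfl | hb
  · rw [EReal.coe_ennreal_top, sub_eq_add_neg, EReal.neg_top, EReal.add_bot]
    exact bot_le
  have ha : a ≠ ⊤ := by
    intro haa
    rw [haa] at h
    have hcb : c + b ≠ ⊤ := ENNReal.add_ne_top.mpr ⟨hc, hb⟩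
    exact hcb (top_le_iff.mp (le_trans (le_add_right le_rfl) h))
  lift a to ℝ≥0 using ha
  lift b to ℝ≥0 using hb
  lift c to ℝ≥0 using hc
  lift d to ℝ≥0 using hd
  rw [EReal.coe_nnreal_eq_coe_real, EReal.coe_nnreal_eq_coe_real,
    EReal.coe_nnreal_eq_coe_real, EReal.coe_nnreal_eq_coe_real,
    ← EReal.coe_sub, ← EReal.coe_sub, EReal.coe_le_coe_iff]
  have h' : (a : ℝ) + d ≤ (c : ℝ) + b := by exact_mod_cast h
  linarith

lemma ereal_top_sub_ne_top (b : ℝ≥0∞) (hb : b ≠ ⊤) : (⊤ : EReal) - (b : EReal) = ⊤ := by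
  lift b to ℝ≥0 using hb
  rw [EReal.coe_nnreal_eq_coe_real, EReal.top_sub_coe]

lemma ennreal_div_mul_le (a b : ℝ≥0∞) : a / b * b ≤ a := by
  rcases eq_or_ne b 0 with rfl | hb
  · simp
  rcases eq_or_ne b ⊤ with rfl | hb'
  · simp [ENNReal.div_top]
  rw [ENNReal.div_mul_cancel hb hb']

lemma ennreal_div_mul_div_cancel {a c : ℝ≥0∞} (ha0 : a ≠ 0) (hat : a ≠ ⊤)
    (hc0 : c ≠ 0) (hct : c ≠ ⊤) : a / c * (c / a) = 1 := by
  rw [div_eq_mul_inv, div_eq_mul_inv]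
  calc a * c⁻¹ * (c * a⁻¹) = a * a⁻¹ * (c⁻¹ * c) := by ring
  _ = 1 := by rw [ENNReal.mul_inv_cancel ha0 hat, ENNReal.inv_mul_cancel hc0 hct, one_mul]

end AuxEPos

section AuxIntegral

lemma lintegral_ePos_log_comparison {α : Type*} [MeasurableSpace α] (ν : Measure α)
    [IsProbabilityMeasure ν] (T : α → ℝ≥0∞) (hT : Measurable T)
    (hT1 : ∫⁻ x, T x ∂ν ≤ 1) :
    ∫⁻ x, ePos (ENNReal.log (T x)) ∂ν ≤ ∫⁻ x, ePos (-(ENNReal.log (T x))) ∂ν := by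
  have h1 : ∀ x, (T x - 1) + 1 = (1 - T x) + T x := by
    intro x
    rcases le_total (T x) 1 with h | h
    · rw [tsub_eq_zero_of_le h, zero_add, tsub_add_cancel_of_le h]
    · rw [tsub_add_cancel_of_le h, tsub_eq_zero_of_le h, zero_add]
  have h2 : ∫⁻ x, (T x - 1) ∂ν + 1 = ∫⁻ x, (1 - T x) ∂ν + ∫⁻ x, T x ∂ν := by
    calc ∫⁻ x, (T x - 1) ∂ν + 1 = ∫⁻ x, (T x - 1) ∂ν + ∫⁻ _, 1 ∂ν := by
          rw [lintegral_one, measure_univ]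
    _ = ∫⁻ x, (T x - 1) + 1 ∂ν := (lintegral_add_right _ measurable_const).symm
    _ = ∫⁻ x, (1 - T x) + T x ∂ν := lintegral_congr h1
    _ = ∫⁻ x, (1 - T x) ∂ν + ∫⁻ x, T x ∂ν := lintegral_add_right _ hT
  have h3 : ∫⁻ x, (T x - 1) ∂ν ≤ ∫⁻ x, (1 - T x) ∂ν := by
    have h4 : ∫⁻ x, (T x - 1) ∂ν + 1 ≤ ∫⁻ x, (1 - T x) ∂ν + 1 := by
      rw [h2]
      exact add_le_add_right hT1 _
    exact (ENNReal.add_le_add_iff_right ENNReal.one_ne_top).mp h4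
  calc ∫⁻ x, ePos (ENNReal.log (T x)) ∂ν ≤ ∫⁻ x, (T x - 1) ∂ν :=
        lintegral_mono fun x => ePos_log_le_sub_one (T x)
  _ ≤ ∫⁻ x, (1 - T x) ∂ν := h3
  _ ≤ ∫⁻ x, ePos (-(ENNReal.log (T x))) ∂ν :=
        lintegral_mono fun x => one_sub_le_ePos_neg_log (T x)

lemma lintegral_pi_prod {Y : Type*} [MeasurableSpace Y] :
    ∀ (n : ℕ) (ν : Fin n → Measure Y), (∀ i, SigmaFinite (ν i)) →
      ∀ (f : Fin n → Y → ℝ≥0∞), (∀ i, Measurable (f i)) →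
        ∫⁻ x, ∏ i, f i (x i) ∂Measure.pi ν = ∏ i, ∫⁻ y, f i y ∂ν i := by
  intro n
  induction n with
  | zero =>
    intro ν hν f hf
    simp only [Finset.univ_eq_empty, Finset.prod_empty]
    rw [lintegral_const, one_mul, Measure.pi_empty_univ]
  | succ n ih =>
    intro ν hν f hf
    haveI := hν
    have mp := (measurePreserving_piFinSuccAbove ν 0).symm
    have hg : Measurable fun x : Fin (n + 1) → Y => ∏ i, f i (x i) :=
      Finset.measurable_prod _ fun i _ => (hf i).comp (measurable_pi_apply i)
    rw [← mp.lintegral_comp hg]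
    have heq : ∀ z : Y × (Fin n → Y),
        (∏ i, f i (((MeasurableEquiv.piFinSuccAbove (fun _ => Y) 0).symm z) i)) =
          f 0 z.1 * ∏ j : Fin n, f j.succ (z.2 j) := by
      intro z
      have h0 : ((MeasurableEquiv.piFinSuccAbove (fun _ => Y) 0).symm z) 0 = z.1 := by
        simp [MeasurableEquiv.piFinSuccAbove]
      have hsucc : ∀ j : Fin n,
          ((MeasurableEquiv.piFinSuccAbove (fun _ => Y) 0).symm z) j.succ = z.2 j := by
        intro j
        rw [← Fin.zero_succAbove]
        simp [MeasurableEquiv.piFinSuccAbove]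
      rw [Fin.prod_univ_succ, h0]
      exact congrArg _ (Finset.prod_congr rfl fun j _ => congrArg _ (hsucc j))
    calc ∫⁻ z, (∏ i, f i (((MeasurableEquiv.piFinSuccAbove (fun _ => Y) 0).symm z) i))
            ∂(ν 0).prod (Measure.pi fun j => ν ((0 : Fin (n+1)).succAbove j))
        = ∫⁻ z, f 0 z.1 * ∏ j : Fin n, f j.succ (z.2 j)
            ∂(ν 0).prod (Measure.pi fun j => ν ((0 : Fin (n+1)).succAbove j)) := by
          exact lintegral_congr heq
      _ = (∫⁻ y, f 0 y ∂ν 0) * ∫⁻ z, ∏ j : Fin n, f j.succ (z j)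
            ∂Measure.pi fun j => ν ((0 : Fin (n+1)).succAbove j) := by
          exact lintegral_prod_mul (hf 0).aemeasurable
            (Finset.measurable_prod (f := fun (j : Fin n) (z : Fin n → Y) => f j.succ (z j)) _
              (fun j _ => (hf j.succ).comp (measurable_pi_apply j))).aemeasurable
      _ = ∏ i, ∫⁻ y, f i y ∂ν i := by
          simp only [Fin.zero_succAbove]
          rw [ih (fun j : Fin n => ν j.succ) (fun j => inferInstance) (fun j : Fin n => f j.succ)
            (fun j => hf j.succ), Fin.prod_univ_succ]

lemma pi_withDensity {Y : Type*} [MeasurableSpace Y] (μ : Measure Y) [SigmaFinite μ] {n : ℕ}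
    (g : Fin n → Y → ℝ≥0∞) (hg : ∀ i, Measurable (g i))
    (hsf : ∀ i, SigmaFinite (μ.withDensity (g i))) :
    Measure.pi (fun i => μ.withDensity (g i)) =
      (Measure.pi fun _ : Fin n => μ).withDensity (fun x => ∏ i, g i (x i)) := by
  haveI := hsf
  apply Measure.pi_eq
  intro S hS
  rw [withDensity_apply _ (MeasurableSet.univ_pi hS),
    ← lintegral_indicator (MeasurableSet.univ_pi hS) (fun x : Fin n → Y => ∏ i, g i (x i))]
  have hind : (Set.univ.pi S).indicator (fun x : Fin n → Y => ∏ i, g i (x i)) =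
      fun x => ∏ i, (S i).indicator (g i) (x i) := by
    funext x
    by_cases hx : x ∈ Set.univ.pi S
    · rw [Set.indicator_of_mem hx]
      exact Finset.prod_congr rfl fun i _ =>
        (Set.indicator_of_mem (hx i (Set.mem_univ i)) _).symm
    · rw [Set.indicator_of_notMem hx]
      rw [Set.mem_univ_pi] at hx
      push_neg at hx
      obtain ⟨i, hi⟩ := hx
      exact (Finset.prod_eq_zero (Finset.mem_univ i)
        (by rw [Set.indicator_of_notMem hi])).symm
  rw [hind, lintegral_pi_prod n (fun _ => μ) (fun _ => inferInstance) _
    (fun i => (hg i).indicator (hS i))]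
  exact Finset.prod_congr rfl fun i _ => by
    rw [lintegral_indicator (hS i) _, ← withDensity_apply _ (hS i)]

end AuxIntegral

/-- Theorem 1, part 2. If the model `{p_θ}` is convex in the sense that the
mixture `(n_a/n)·p_{θ*_a} + (n_b/n)·p_{θ*_b}` is again a member `p_{θ°}` of the model, then the
simple two-stream statistic `s` is the `(θ*_a, θ*_b)`-GRO E-variable: every E-variable `s'`
for `n` outcomes satisfies `E_Q[log s'] ≤ E_Q[log s]` (expectations in the extended reals). -/
theorem two_stream_evariable_GRO {Y : Type*} [MeasurableSpace Y]
    (μ : Measure Y) [SigmaFinite μ] {Θ : Type*}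
    (p : Θ → Y → ℝ≥0∞) (hpm : ∀ θ, Measurable (p θ)) (hp1 : ∀ θ, ∫⁻ y, p θ y ∂μ = 1)
    (P : Θ → Measure Y) [∀ θ, IsProbabilityMeasure (P θ)]
    (hP : ∀ θ, P θ = μ.withDensity (p θ))
    (θa θb θ0 : Θ) (na nb : ℕ) (hna : 0 < na) (hnb : 0 < nb)
    (hconv : p θ0 =ᵐ[μ] fun y =>
      (↑na / (↑na + ↑nb) : ℝ≥0∞) * p θa y + (↑nb / (↑na + ↑nb) : ℝ≥0∞) * p θb y)
    (Q : Measure (Fin (na + nb) → Y))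
    (hQ : Q = Measure.pi fun i : Fin (na + nb) => if (i : ℕ) < na then P θa else P θb)
    (s : (Fin (na + nb) → Y) → ℝ≥0∞)
    (hs : s = fun x => ∏ i : Fin (na + nb),
      (if (i : ℕ) < na then p θa (x i) / p θ0 (x i) else p θb (x i) / p θ0 (x i)))
    (s' : (Fin (na + nb) → Y) → ℝ≥0∞) (hs'm : Measurable s')
    (hs'E : ∀ θ, ∫⁻ x, s' x ∂(Measure.pi fun _ : Fin (na + nb) => P θ) ≤ 1) :
    eIntegral Q (fun x => ENNReal.log (s' x)) ≤ eIntegral Q (fun x => ENNReal.log (s x)) := by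
  -- setup
  classical
  set pv : Fin (na + nb) → Y → ℝ≥0∞ :=
    fun i => if (i : ℕ) < na then p θa else p θb with hpv
  have hpvm : ∀ i, Measurable (pv i) := by
    intro i
    simp only [hpv]
    split <;> [exact hpm θa; exact hpm θb]
  set ν : Fin (na + nb) → Measure Y :=
    fun i => if (i : ℕ) < na then P θa else P θb with hν
  have hprob : ∀ i, IsProbabilityMeasure (ν i) := by
    intro i
    simp only [hν]
    split <;> infer_instance
  haveI := hprob
  have hνw : ∀ i, ν i = μ.withDensity (pv i) := by
    intro i
    simp only [hν, hpv]
    split <;> [exact hP θa; exact hP θb]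
  have hQν : Q = Measure.pi ν := hQ
  haveI : IsProbabilityMeasure Q := by rw [hQν]; infer_instance
  -- the simple statistic, rewritten
  have hsf : s = fun x => ∏ i, pv i (x i) / p θ0 (x i) := by
    rw [hs]
    funext x
    refine Finset.prod_congr rfl fun i _ => ?_
    simp only [hpv]
    split <;> rfl
  -- densities of product measures
  set ρ : Measure (Fin (na + nb) → Y) := Measure.pi (fun _ => μ) with hρ
  set q : (Fin (na + nb) → Y) → ℝ≥0∞ := fun x => ∏ i, pv i (x i) with hq
  set p0n : (Fin (na + nb) → Y) → ℝ≥0∞ := fun x => ∏ i, p θ0 (x i) with hp0n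
  set fdiv : (Fin (na + nb) → Y) → ℝ≥0∞ := fun x => ∏ i, p θ0 (x i) / pv i (x i) with hfdiv
  set T : (Fin (na + nb) → Y) → ℝ≥0∞ := fun x => s' x * fdiv x with hT
  have hqm : Measurable q :=
    Finset.measurable_prod _ fun i _ => (hpvm i).comp (measurable_pi_apply i)
  have hp0nm : Measurable p0n :=
    Finset.measurable_prod _ fun i _ => (hpm θ0).comp (measurable_pi_apply i)
  have hfm : Measurable fdiv :=
    Finset.measurable_prod _ fun i _ =>
      ((hpm θ0).comp (measurable_pi_apply i)).div ((hpvm i).comp (measurable_pi_apply i))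
  have hsm : Measurable s := by
    rw [hsf]
    exact Finset.measurable_prod _ fun i _ =>
      ((hpvm i).comp (measurable_pi_apply i)).div ((hpm θ0).comp (measurable_pi_apply i))
  have hTm : Measurable T := hs'm.mul hfm
  have hQw : Q = ρ.withDensity q := by
    rw [hQν]
    have : ν = fun i => μ.withDensity (pv i) := funext hνw
    rw [this]
    exact pi_withDensity μ pv hpvm fun i => by
      rw [← hνw i]; infer_instance
  have hP0w : (Measure.pi fun _ : Fin (na + nb) => P θ0) = ρ.withDensity p0n := by
    have : (fun _ : Fin (na + nb) => P θ0) = fun _ => μ.withDensity (p θ0) :=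
      funext fun _ => hP θ0
    rw [this]
    exact pi_withDensity μ (fun _ => p θ0) (fun _ => hpm θ0) fun _ => by
      rw [← hP θ0]; infer_instance
  -- key product bound
  have hfq : ∀ x, fdiv x * q x ≤ p0n x := by
    intro x
    rw [hfdiv, hq, hp0n]
    simp only
    rw [← Finset.prod_mul_distrib]
    exact Finset.prod_le_prod' fun i _ => ennreal_div_mul_le _ _
  -- E-variable bounds
  have hT1 : ∫⁻ x, T x ∂Q ≤ 1 := by
    rw [hQw, lintegral_withDensity_eq_lintegral_mul _ hqm hTm]
    calc ∫⁻ x, (q * T) x ∂ρ ≤ ∫⁻ x, (p0n * s') x ∂ρ := by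
          apply lintegral_mono
          intro x
          simp only [Pi.mul_apply, hT]
          calc q x * (s' x * fdiv x) = s' x * (fdiv x * q x) := by ring
          _ ≤ s' x * p0n x := mul_le_mul_right (hfq x) _
          _ = p0n x * s' x := mul_comm _ _
    _ = ∫⁻ x, s' x ∂(ρ.withDensity p0n) :=
          (lintegral_withDensity_eq_lintegral_mul _ hp0nm hs'm).symm
    _ = ∫⁻ x, s' x ∂(Measure.pi fun _ : Fin (na + nb) => P θ0) := by rw [hP0w]
    _ ≤ 1 := hs'E θ0
  have hf1 : ∫⁻ x, fdiv x ∂Q ≤ 1 := by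
    rw [hQw, lintegral_withDensity_eq_lintegral_mul _ hqm hfm]
    calc ∫⁻ x, (q * fdiv) x ∂ρ ≤ ∫⁻ x, p0n x ∂ρ := by
          apply lintegral_mono
          intro x
          simp only [Pi.mul_apply]
          rw [mul_comm]
          exact hfq x
    _ = (ρ.withDensity p0n) Set.univ := by
          rw [withDensity_apply _ MeasurableSet.univ, setLIntegral_univ]
    _ = 1 := by
          rw [← hP0w]
          haveI : IsProbabilityMeasure (Measure.pi fun _ : Fin (na + nb) => P θ0) :=
            inferInstance
          exact measure_univ
  -- a.e. facts
  have hca0 : (na : ℝ≥0∞) / (na + nb) ≠ 0 := by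
    apply ENNReal.div_ne_zero.mpr
    exact ⟨by exact_mod_cast hna.ne', by simp [ENNReal.add_ne_top]⟩
  have hcb0 : (nb : ℝ≥0∞) / (na + nb) ≠ 0 := by
    apply ENNReal.div_ne_zero.mpr
    exact ⟨by exact_mod_cast hnb.ne', by simp [ENNReal.add_ne_top]⟩
  have hden0 : ((na : ℝ≥0∞) + nb) ≠ 0 := by
    intro h
    rw [add_eq_zero] at h
    exact (Nat.cast_ne_zero.mpr hna.ne') h.1
  have hcat : (na : ℝ≥0∞) / (na + nb) ≠ ⊤ :=
    (ENNReal.div_lt_top (ENNReal.natCast_ne_top na) hden0).ne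
  have hcbt : (nb : ℝ≥0∞) / (na + nb) ≠ ⊤ :=
    (ENNReal.div_lt_top (ENNReal.natCast_ne_top nb) hden0).ne
  have hGae : ∀ᵐ y ∂μ, p θa y ≠ ⊤ ∧ p θb y ≠ ⊤ ∧
      p θ0 y = (↑na / (↑na + ↑nb) : ℝ≥0∞) * p θa y + (↑nb / (↑na + ↑nb) : ℝ≥0∞) * p θb y := by
    have ha := ae_lt_top (hpm θa) (by rw [hp1 θa]; exact ENNReal.one_ne_top)
    have hb := ae_lt_top (hpm θb) (by rw [hp1 θb]; exact ENNReal.one_ne_top)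
    filter_upwards [ha, hb, hconv] with y hya hyb hyc
    exact ⟨hya.ne, hyb.ne, hyc⟩
  have hcoord : ∀ i, ∀ᵐ y ∂ν i, pv i y ≠ 0 ∧ pv i y ≠ ⊤ ∧ p θ0 y ≠ 0 ∧ p θ0 y ≠ ⊤ := by
    intro i
    have hac : ν i ≪ μ := by rw [hνw i]; exact withDensity_absolutelyContinuous μ (pv i)
    have hG' : ∀ᵐ y ∂ν i, p θa y ≠ ⊤ ∧ p θb y ≠ ⊤ ∧
        p θ0 y = (↑na / (↑na + ↑nb) : ℝ≥0∞) * p θa y + (↑nb / (↑na + ↑nb) : ℝ≥0∞) * p θb y :=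
      hGae.filter_mono hac.ae_le
    have hne0 : ∀ᵐ y ∂ν i, pv i y ≠ 0 := by
      have hAm : MeasurableSet {y | pv i y = 0} := (hpvm i) (measurableSet_singleton 0)
      have hz : ν i {y | pv i y = 0} = 0 := by
        rw [hνw i, withDensity_apply _ hAm]
        calc ∫⁻ y in {y | pv i y = 0}, pv i y ∂μ
            = ∫⁻ _ in {y | pv i y = 0}, 0 ∂μ :=
              setLIntegral_congr_fun hAm (fun y hy => hy)
        _ = 0 := lintegral_zero
      rw [ae_iff]
      simpa using hz
    filter_upwards [hG', hne0] with y hy h0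
    obtain ⟨hat, hbt, hcv⟩ := hy
    have hpvt : pv i y ≠ ⊤ := by
      simp only [hpv]
      split <;> assumption
    refine ⟨h0, hpvt, ?_, ?_⟩
    · rw [hcv]
      intro hsum
      rw [add_eq_zero] at hsum
      by_cases hcase : (i : ℕ) < na
      · have : pv i y = p θa y := by simp only [hpv]; rw [if_pos hcase]
        exact mul_ne_zero hca0 (this ▸ h0) hsum.1
      · have : pv i y = p θb y := by simp only [hpv]; rw [if_neg hcase]
        exact mul_ne_zero hcb0 (this ▸ h0) hsum.2
    · rw [hcv]
      exact ENNReal.add_ne_top.mpr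
        ⟨ENNReal.mul_ne_top hcat hat, ENNReal.mul_ne_top hcbt hbt⟩
  have hQae : ∀ᵐ x ∂Q, ∀ i, pv i (x i) ≠ 0 ∧ pv i (x i) ≠ ⊤ ∧
      p θ0 (x i) ≠ 0 ∧ p θ0 (x i) ≠ ⊤ := by
    rw [hQν, ae_all_iff]
    intro i
    exact Measure.tendsto_eval_ae_ae.eventually (hcoord i)
  -- the main pointwise a.e. facts
  have hmain : ∀ᵐ x ∂Q, s x ≠ 0 ∧ s x ≠ ⊤ ∧ fdiv x = (s x)⁻¹ ∧
      ENNReal.log (s' x) = ENNReal.log (T x) + ENNReal.log (s x) := by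
    filter_upwards [hQae] with x hx
    have hs0 : s x ≠ 0 := by
      rw [hsf]
      refine Finset.prod_ne_zero_iff.mpr fun i _ => ?_
      exact (ENNReal.div_pos (hx i).1 (hx i).2.2.2).ne'
    have hst : s x ≠ ⊤ := by
      rw [hsf]
      exact (ENNReal.prod_lt_top fun i _ =>
        ENNReal.div_lt_top (hx i).2.1 (hx i).2.2.1).ne
    have hmul : s x * fdiv x = 1 := by
      rw [hsf, hfdiv]
      simp only
      rw [← Finset.prod_mul_distrib]
      refine Finset.prod_eq_one fun i _ => ?_
      exact ennreal_div_mul_div_cancel (hx i).1 (hx i).2.1 (hx i).2.2.1 (hx i).2.2.2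
    have hfinv : fdiv x = (s x)⁻¹ := by
      calc fdiv x = (s x)⁻¹ * (s x * fdiv x) := by
            rw [← mul_assoc, ENNReal.inv_mul_cancel hs0 hst, one_mul]
      _ = (s x)⁻¹ := by rw [hmul, mul_one]
    refine ⟨hs0, hst, hfinv, ?_⟩
    have hlogT : ENNReal.log (T x) = ENNReal.log (s' x) + ENNReal.log (fdiv x) := by
      rw [hT]; exact ENNReal.log_mul_add
    have hlogf : ENNReal.log (fdiv x) = -(ENNReal.log (s x)) := by
      rw [hfinv, ENNReal.log_inv]
    have hw : ENNReal.log (s x) = ((Real.log (s x).toReal : ℝ) : EReal) :=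
      ENNReal.log_pos_real hs0 hst
    rw [hlogT, hlogf, hw]
    exact (ereal_add_neg_coe_add (ENNReal.log (s' x)) (Real.log (s x).toReal)).symm
  -- abbreviations for the six integrals
  simp only [eIntegral]
  set Ap := ∫⁻ x, ePos (ENNReal.log (s' x)) ∂Q with hAp
  set Am := ∫⁻ x, ePos (-(ENNReal.log (s' x))) ∂Q with hAm
  set Bp := ∫⁻ x, ePos (ENNReal.log (s x)) ∂Q with hBp
  set Bm := ∫⁻ x, ePos (-(ENNReal.log (s x))) ∂Q with hBm
  set Up := ∫⁻ x, ePos (ENNReal.log (T x)) ∂Q with hUp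
  set Um := ∫⁻ x, ePos (-(ENNReal.log (T x))) ∂Q with hUm
  have hBm1 : Bm ≤ 1 := by
    have : Bm = ∫⁻ x, ePos (ENNReal.log (fdiv x)) ∂Q := by
      rw [hBm]
      apply lintegral_congr_ae
      filter_upwards [hmain] with x hx
      rw [← ENNReal.log_inv, ← hx.2.2.1]
    rw [this]
    exact le_trans (lintegral_mono fun x => ePos_log_le (fdiv x)) hf1
  have hBmt : Bm ≠ ⊤ := (lt_of_le_of_lt hBm1 ENNReal.one_lt_top).ne
  have hUp1 : Up ≤ 1 := le_trans (lintegral_mono fun x => ePos_log_le (T x)) hT1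
  have hUpt : Up ≠ ⊤ := (lt_of_le_of_lt hUp1 ENNReal.one_lt_top).ne
  have hUpUm : Up ≤ Um := lintegral_ePos_log_comparison Q T hTm hT1
  -- accounting identity
  have hidentity : Ap + (Um + Bm) = Am + (Up + Bp) := by
    have m1 : Measurable fun x : Fin (na + nb) → Y => ePos (-(ENNReal.log (T x))) :=
      measurable_ePos_neg_log.comp hTm
    have m2 : Measurable fun x : Fin (na + nb) → Y => ePos (ENNReal.log (s' x)) :=
      measurable_ePos_log.comp hs'm
    have m3 : Measurable fun x : Fin (na + nb) → Y => ePos (ENNReal.log (T x)) :=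
      measurable_ePos_log.comp hTm
    have m4 : Measurable fun x : Fin (na + nb) → Y => ePos (-(ENNReal.log (s' x))) :=
      measurable_ePos_neg_log.comp hs'm
    rw [hAp, hAm, hBp, hBm, hUp, hUm,
      ← lintegral_add_left m1, ← lintegral_add_left m2,
      ← lintegral_add_left m3, ← lintegral_add_left m4]
    apply lintegral_congr_ae
    filter_upwards [hmain] with x hx
    obtain ⟨hs0, hst, _, hlog⟩ := hx
    have hw : ENNReal.log (s x) = ((Real.log (s x).toReal : ℝ) : EReal) :=
      ENNReal.log_pos_real hs0 hst
    rw [hlog, hw]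
    exact ePos_accounting (ENNReal.log (T x)) (Real.log (s x).toReal)
  -- conclusion
  by_cases hBpt : Bp = ⊤
  · rw [hBpt, EReal.coe_ennreal_top, ereal_top_sub_ne_top Bm hBmt]
    exact le_top
  · have hkey : Ap + Bm ≤ Bp + Am := by
      by_cases hUmt : Um = ⊤
      · have hAmt : Am = ⊤ := by
          by_contra hAm'
          have hne : Am + (Up + Bp) ≠ ⊤ :=
            ENNReal.add_ne_top.mpr ⟨hAm', ENNReal.add_ne_top.mpr ⟨hUpt, hBpt⟩⟩
          apply hne
          rw [← hidentity, hUmt]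
          simp
        rw [hAmt, add_top]
        exact le_top
      · have h2 : Ap + Bm + Um ≤ Am + Bp + Um := by
          calc Ap + Bm + Um = Ap + (Um + Bm) := by ring
          _ = Am + (Up + Bp) := hidentity
          _ ≤ Am + (Um + Bp) := add_le_add_right (add_le_add_left hUpUm _) _
          _ = Am + Bp + Um := by ring
        have h3 : Ap + Bm ≤ Am + Bp := (ENNReal.add_le_add_iff_right hUmt).mp h2
        rw [add_comm Am Bp] at h3
        exact h3
    exact ereal_sub_le_sub Ap Am Bp Bm hBpt hBmt hkey
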